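/- Let (n_k) be a sequence of positive integers with n_0 = 1 and n_k^3 ≤ n_{k+1} ≤ n_k^{3m} for a fixed integer m ≥ 2, and let n_1 > 1. Define a_v(i) as the least nonnegative residue of i mod n_v and d_i = Σ_{v=1}^∞ a_v(i)/(n_{v-1}^2 n_v). Then for all integers i_1 ≠ i_2, one has |d_{i_1} − d_{i_2}| ≥ (2/3)·max(n_1, |i_1 − i_2|)^{−(3m+1)}. In particular, d is a distal sequence. -/

import Mathlib

private lemma shape1 (A B D E : ℝ) (hB : 0 < B) (hE : 0 < E) (hD1 : 1 ≤ D)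
    (h2A2B : 2 * A ^ 2 ≤ B) (hA : 0 < A) (h : 10 * (A ^ 2 * B) ≤ 7 * E) :
    2 / 3 * E⁻¹ ≤ D / (A ^ 2 * B) - 16 / 15 / B ^ 2 := by
  have hP : (0:ℝ) < A ^ 2 * B := by positivity
  have t1 : 2 / 3 * E⁻¹ ≤ (7 / 15) / (A ^ 2 * B) := by
    rw [show (2/3:ℝ) * E⁻¹ = (2/3) / E by ring, div_le_div_iff₀ hE hP]
    linarith
  have t2 : (16:ℝ) / 15 / B ^ 2 ≤ (8 / 15) / (A ^ 2 * B) := by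
    rw [div_le_div_iff₀ (by positivity) hP]
    nlinarith
  have t3 : (1:ℝ) / (A ^ 2 * B) ≤ D / (A ^ 2 * B) := by
    rw [div_le_div_iff₀ hP hP]; nlinarith
  calc 2 / 3 * E⁻¹ ≤ (7 / 15) / (A ^ 2 * B) := t1
    _ = 1 / (A ^ 2 * B) - (8 / 15) / (A ^ 2 * B) := by rw [div_sub_div_same]; norm_num
    _ ≤ D / (A ^ 2 * B) - 16 / 15 / B ^ 2 := sub_le_sub t3 t2

private lemma shape2 (A B D E : ℝ) (hA2 : 2 ≤ A) (hB : 0 < B) (hE : 0 < E)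
    (hAD : A ≤ D) (hA3B : A ^ 3 ≤ B) (hABE : A * B ≤ E) :
    2 / 3 * E⁻¹ ≤ D / (A ^ 2 * B) - 16 / 15 / B ^ 2 := by
  have hApos : (0:ℝ) < A := by linarith
  have hP : (0:ℝ) < A ^ 2 * B := by positivity
  have hAB : (0:ℝ) < A * B := by positivity
  have t1 : 2 / 3 * E⁻¹ ≤ (11 / 15) / (A * B) := by
    rw [show (2/3:ℝ) * E⁻¹ = (2/3) / E by ring, div_le_div_iff₀ hE hAB]
    nlinarith
  have t2 : (16:ℝ) / 15 / B ^ 2 ≤ (4 / 15) / (A * B) := by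
    rw [div_le_div_iff₀ (by positivity) hAB]
    nlinarith
  have t3 : A / (A ^ 2 * B) = 1 / (A * B) := by
    rw [div_eq_div_iff hP.ne' hAB.ne']; ring
  have t4 : A / (A ^ 2 * B) ≤ D / (A ^ 2 * B) := by
    rw [div_le_div_iff₀ hP hP]; nlinarith
  calc 2 / 3 * E⁻¹ ≤ (11 / 15) / (A * B) := t1
    _ = 1 / (A * B) - (4 / 15) / (A * B) := by rw [div_sub_div_same]; norm_num
    _ = A / (A ^ 2 * B) - (4 / 15) / (A * B) := by rw [t3]
    _ ≤ D / (A ^ 2 * B) - 16 / 15 / B ^ 2 := sub_le_sub t4 t2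

private lemma shape3 (A B D E : ℝ) (hA1 : 1 ≤ A) (hB : 0 < B) (hE : 0 < E)
    (hBD : B / 2 ≤ D) (h2A2B : 2 * A ^ 2 ≤ B) (h : 20 * A ^ 2 ≤ 7 * E) :
    2 / 3 * E⁻¹ ≤ D / (A ^ 2 * B) - 16 / 15 / B ^ 2 := by
  have hA : (0:ℝ) < A := by linarith
  have hP : (0:ℝ) < A ^ 2 * B := by positivity
  have hA2 : (0:ℝ) < A ^ 2 := by positivity
  have t1 : 2 / 3 * E⁻¹ ≤ (7 / 30) / A ^ 2 := by
    rw [show (2/3:ℝ) * E⁻¹ = (2/3) / E by ring, div_le_div_iff₀ hE hA2]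
    linarith
  have t2 : (16:ℝ) / 15 / B ^ 2 ≤ (4 / 15) / A ^ 2 := by
    rw [div_le_div_iff₀ (by positivity) hA2]
    have e1 : 4 * A ^ 4 ≤ B ^ 2 := by nlinarith [h2A2B, sq_nonneg A, sq_nonneg (B - 2*A^2)]
    have eA : A ^ 2 ≤ A ^ 4 := by nlinarith [hA1, sq_nonneg A, sq_nonneg (A - 1), sq_nonneg (A + 1)]
    nlinarith
  have t3 : (1 / 2 : ℝ) / A ^ 2 = (B / 2) / (A ^ 2 * B) := by
    rw [div_eq_div_iff hA2.ne' hP.ne']; ring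
  have t4 : (B / 2) / (A ^ 2 * B) ≤ D / (A ^ 2 * B) := by
    rw [div_le_div_iff₀ hP hP]; nlinarith
  calc 2 / 3 * E⁻¹ ≤ (7 / 30) / A ^ 2 := t1
    _ = (1 / 2) / A ^ 2 - (4 / 15) / A ^ 2 := by rw [div_sub_div_same]; norm_num
    _ = (B / 2) / (A ^ 2 * B) - (4 / 15) / A ^ 2 := by rw [t3]
    _ ≤ D / (A ^ 2 * B) - 16 / 15 / B ^ 2 := sub_le_sub t4 t2

set_option maxHeartbeats 3000000 in
/-- The limit-periodic sequence `d_i = Σ_{v≥1} a_v(i)/(n_{v-1}^2 n_v)` is distal: for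
`i₁ ≠ i₂`, `|d_{i₁} − d_{i₂}| ≥ (2/3)·max(n₁, |i₁−i₂|)^{−(3m+1)}`. -/
theorem stmt2 (m : ℕ) (hm : 2 ≤ m) (n : ℕ → ℕ) (h0 : n 0 = 1) (h1 : 1 < n 1)
    (hlow : ∀ k, (n k) ^ 3 ≤ n (k + 1))
    (hup : ∀ k, 1 ≤ k → n (k + 1) ≤ (n k) ^ (3 * m))
    (d : ℤ → ℝ)
    (hd : ∀ i : ℤ, d i = ∑' v : ℕ,
      ((i % (n (v + 1) : ℤ) : ℤ) : ℝ) / ((n v : ℝ) ^ 2 * (n (v + 1) : ℝ))) :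
    ∀ i₁ i₂ : ℤ, i₁ ≠ i₂ →
      |d i₁ - d i₂| ≥ (2 / 3) * ((max (n 1 : ℝ) |(i₁ : ℝ) - (i₂ : ℝ)|) ^ (3 * m + 1))⁻¹ := by
  classical
  have npos : ∀ v, 1 ≤ n v := by
    intro v
    induction v with
    | zero => omega
    | succ v ih => exact le_trans (Nat.one_le_pow _ _ ih) (hlow v)
  have hn2 : ∀ v, 1 ≤ v → 2 ≤ n v := by
    intro v hv
    induction v with
    | zero => omega
    | succ v ih =>
      rcases Nat.eq_zero_or_pos v with h | h
      · subst h; exact h1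
      · exact le_trans (ih h) (le_trans (Nat.le_self_pow (by norm_num) _) (hlow v))
  have h2pow : ∀ v, 2 ^ v ≤ (n v) ^ 2 := by
    intro v
    induction v with
    | zero => simp [h0]
    | succ v ih =>
      have hl := hlow v
      rcases Nat.eq_zero_or_pos v with h | h
      · subst h
        calc 2 ^ (0+1) = 2 := by norm_num
          _ ≤ n 1 := h1
          _ ≤ n 1 ^ 2 := Nat.le_self_pow (by norm_num) _
      · have h2 := hn2 v h
        have e2 : (n v)^3 * (n v)^3 ≤ n (v+1) * n (v+1) := Nat.mul_le_mul hl hl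
        have e4 : 2 * (n v)^2 ≤ (n v)^3 * (n v)^3 := by
          have e5 : 2 ≤ (n v)^4 := le_trans (by norm_num) (Nat.pow_le_pow_left h2 4)
          calc 2 * (n v)^2 ≤ (n v)^4 * (n v)^2 := Nat.mul_le_mul_right _ e5
            _ = (n v)^3 * (n v)^3 := by ring
        calc 2 ^ (v+1) = 2 * 2 ^ v := by ring
          _ ≤ 2 * (n v) ^ 2 := by omega
          _ ≤ (n v)^3 * (n v)^3 := e4
          _ ≤ n (v+1) * n (v+1) := e2
          _ = (n (v+1)) ^ 2 := by ring
  have hgrow2 : ∀ v, 2 ^ v ≤ n (v+1) := by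
    intro v
    induction v with
    | zero => simpa using npos 1
    | succ v ih =>
      have h2 := hn2 (v+1) (by omega)
      have hl := hlow (v+1)
      have key : 2 * n (v+1) ≤ n (v+2) := by
        have e5 : 2 ≤ (n (v+1))^2 := le_trans (by norm_num) (Nat.pow_le_pow_left h2 2)
        calc 2 * n (v+1) ≤ (n (v+1))^2 * n (v+1) := Nat.mul_le_mul_right _ e5
          _ = (n (v+1))^3 := by ring
          _ ≤ n (v+2) := hl
      calc 2 ^ (v+1) = 2 * 2 ^ v := by ring
        _ ≤ 2 * n (v+1) := by omega
        _ ≤ n (v+2) := key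
  have nposR : ∀ v, (0:ℝ) < (n v : ℝ) := fun v => by exact_mod_cast npos v
  have nposZ : ∀ v, (0:ℤ) < (n v : ℤ) := fun v => by exact_mod_cast npos v
  have hdenpos : ∀ v, (0:ℝ) < (n v : ℝ) ^ 2 * (n (v + 1) : ℝ) :=
    fun v => mul_pos (pow_pos (nposR v) 2) (nposR (v+1))
  have hbound : ∀ v, (1:ℝ) / (n v : ℝ) ^ 2 ≤ (1/2 : ℝ) ^ v := by
    intro v
    rw [div_pow, one_pow, div_le_div_iff₀ (pow_pos (nposR v) 2) (pow_pos (by norm_num) v)]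
    have h2v : (2:ℝ) ^ v ≤ ((n v : ℝ)) ^ 2 := by exact_mod_cast h2pow v
    nlinarith
  have hsum : ∀ i : ℤ, Summable (fun v : ℕ =>
      ((i % (n (v + 1) : ℤ) : ℤ) : ℝ) / ((n v : ℝ) ^ 2 * (n (v + 1) : ℝ))) := by
    intro i
    refine Summable.of_nonneg_of_le (fun v => ?_) (fun v => ?_)
      (summable_geometric_of_lt_one (by norm_num) (by norm_num : (1/2:ℝ) < 1))
    · have h1' : (0:ℝ) ≤ ((i % (n (v+1) : ℤ) : ℤ) : ℝ) := by
        exact_mod_cast Int.emod_nonneg i (nposZ (v+1)).ne'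
      exact div_nonneg h1' (hdenpos v).le
    · have hlt : ((i % (n (v+1) : ℤ) : ℤ) : ℝ) ≤ (n (v+1) : ℝ) := by
        exact_mod_cast (Int.emod_lt_of_pos i (nposZ (v+1))).le
      have hdv := hdenpos v
      calc ((i % (n (v+1) : ℤ) : ℤ) : ℝ) / ((n v : ℝ) ^ 2 * (n (v + 1) : ℝ))
          ≤ (n (v+1) : ℝ) / ((n v : ℝ) ^ 2 * (n (v + 1) : ℝ)) := by gcongr
        _ = 1 / (n v : ℝ) ^ 2 := by
            rw [div_eq_div_iff (hdenpos v).ne' (pow_pos (nposR v) 2).ne']; ring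
        _ ≤ (1/2 : ℝ) ^ v := hbound v
  intro i₁ i₂ hne
  set k : ℤ := i₁ - i₂ with hkdef
  have hk0 : k ≠ 0 := sub_ne_zero.mpr hne
  set K : ℤ := |k| with hKdef
  have hK1 : (1:ℤ) ≤ K := by
    have := abs_pos.mpr hk0; omega
  set δ : ℕ → ℤ := fun v => i₁ % (n v : ℤ) - i₂ % (n v : ℤ) with hδdef
  have hδabs : ∀ v, |δ v| < (n v : ℤ) := by
    intro v
    have a1 := Int.emod_nonneg i₁ (nposZ v).ne'
    have a2 := Int.emod_nonneg i₂ (nposZ v).ne'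
    have b1 := Int.emod_lt_of_pos i₁ (nposZ v)
    have b2 := Int.emod_lt_of_pos i₂ (nposZ v)
    rw [abs_lt]
    constructor <;> simp only [hδdef] <;> omega
  have hδdvd : ∀ v, (n v : ℤ) ∣ (δ v - k) := by
    intro v
    have e1 := Int.emod_add_mul_ediv i₁ (n v : ℤ)
    have e2 := Int.emod_add_mul_ediv i₂ (n v : ℤ)
    refine ⟨(i₂ / (n v:ℤ)) - (i₁ / (n v:ℤ)), ?_⟩
    simp only [hδdef, hkdef]
    linear_combination e1 - e2
  have hδK : ∀ v, δ v = 0 → (n v : ℤ) ≤ K := by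
    intro v h
    have hdv : (n v:ℤ) ∣ k := by
      have h6 := hδdvd v
      rw [h, zero_sub] at h6
      exact (dvd_neg).mp h6
    exact Int.le_of_dvd (abs_pos.mpr hk0) ((dvd_abs _ _).mpr hdv)
  have hex : ∃ v, 1 ≤ v ∧ δ v ≠ 0 := by
    refine ⟨K.toNat + 1, by omega, fun hcon => ?_⟩
    have hle := hδK _ hcon
    have h2 : (K.toNat : ℤ) < (2:ℤ) ^ K.toNat := by exact_mod_cast Nat.lt_two_pow_self
    have h3 : (2:ℤ) ^ K.toNat ≤ (n (K.toNat+1) : ℤ) := by exact_mod_cast hgrow2 K.toNat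
    have h4 : (K.toNat : ℤ) = K := Int.toNat_of_nonneg (by omega)
    linarith
  have hu1 : 1 ≤ Nat.find hex := (Nat.find_spec hex).1
  obtain ⟨N, hN⟩ : ∃ N, Nat.find hex = N + 1 := ⟨Nat.find hex - 1, by omega⟩
  have hδu : δ (N+1) ≠ 0 := by rw [← hN]; exact (Nat.find_spec hex).2
  have humin : ∀ v, 1 ≤ v → v < N+1 → δ v = 0 := by
    intro v hv1 hv2
    by_contra h
    exact Nat.find_min hex (by rw [hN]; exact hv2) ⟨hv1, h⟩
  have hANK : (n N : ℤ) ≤ K := by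
    rcases Nat.eq_zero_or_pos N with h | h
    · rw [h, h0]; exact_mod_cast hK1
    · exact hδK N (humin N h (by omega))
  -- the difference sequence t
  set t : ℕ → ℝ := fun v => ((δ (v+1) : ℤ) : ℝ) / ((n v : ℝ) ^ 2 * (n (v + 1) : ℝ)) with htdef
  have hteq : ∀ v, t v = ((i₁ % (n (v + 1) : ℤ) : ℤ) : ℝ) / ((n v : ℝ) ^ 2 * (n (v + 1) : ℝ))
      - ((i₂ % (n (v + 1) : ℤ) : ℤ) : ℝ) / ((n v : ℝ) ^ 2 * (n (v + 1) : ℝ)) := by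
    intro v
    simp only [htdef, hδdef]
    push_cast
    ring
  have htsum : Summable t := by
    have := (hsum i₁).sub (hsum i₂)
    exact this.congr fun v => (hteq v).symm
  have hdiff : d i₁ - d i₂ = ∑' v, t v := by
    rw [hd i₁, hd i₂, ← Summable.tsum_sub (hsum i₁) (hsum i₂)]
    exact tsum_congr fun v => (hteq v).symm
  have htabs : ∀ v, |t v| ≤ 1 / ((n v:ℝ)) ^ 2 := by
    intro v
    have h1' : |((δ (v+1):ℤ):ℝ)| ≤ (n (v+1):ℝ) := by
      rw [← Int.cast_abs]
      exact_mod_cast (hδabs (v+1)).le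
    have hdv := hdenpos v
    calc |t v| = |((δ (v+1):ℤ):ℝ)| / ((n v : ℝ) ^ 2 * (n (v + 1) : ℝ)) := by
          simp only [htdef]
          rw [abs_div, abs_of_pos hdv]
      _ ≤ (n (v+1):ℝ) / ((n v : ℝ) ^ 2 * (n (v + 1) : ℝ)) := by gcongr
      _ = 1 / (n v : ℝ) ^ 2 := by
          rw [div_eq_div_iff hdv.ne' (pow_pos (nposR v) 2).ne']; ring
  have hgrow4 : ∀ j, (n (N+1)) * 4 ^ j ≤ n (j + (N+1)) := by
    intro j
    induction j with
    | zero => simp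
    | succ j ih =>
      have h2 := hn2 (j + (N+1)) (by omega)
      have hl := hlow (j + (N+1))
      have key : 4 * n (j + (N+1)) ≤ n (j + (N+1) + 1) := by
        have e5 : 4 ≤ (n (j+(N+1)))^2 := le_trans (by norm_num) (Nat.pow_le_pow_left h2 2)
        calc 4 * n (j+(N+1)) ≤ (n (j+(N+1)))^2 * n (j+(N+1)) := Nat.mul_le_mul_right _ e5
          _ = (n (j+(N+1)))^3 := by ring
          _ ≤ n (j + (N+1) + 1) := hl
      have : n (N+1) * 4 ^ (j+1) = 4 * (n (N+1) * 4 ^ j) := by ring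
      rw [this, show j + 1 + (N+1) = j + (N+1) + 1 by omega]
      calc 4 * (n (N+1) * 4 ^ j) ≤ 4 * n (j + (N+1)) := by omega
        _ ≤ n (j + (N+1) + 1) := key
  have hsubabs : Summable fun j => |t (j + (N+1))| := ((summable_nat_add_iff (N+1)).mpr htsum).abs
  have htail : (∑' j, |t (j + (N+1))|) ≤ (16/15) / ((n (N+1):ℝ)) ^ 2 := by
    have hle : ∀ j, |t (j + (N+1))| ≤ (1/((n (N+1):ℝ))^2) * (1/16 : ℝ) ^ j := by
      intro j
      refine (htabs _).trans ?_
      have hy : (0:ℝ) < (n (N+1):ℝ) * 4 ^ j := mul_pos (nposR _) (by positivity)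
      have hyx : (n (N+1):ℝ) * 4 ^ j ≤ (n (j+(N+1)):ℝ) := by exact_mod_cast hgrow4 j
      have h1' : (1:ℝ)/((n (j+(N+1)):ℝ))^2 ≤ 1/((n (N+1):ℝ)*4^j)^2 := by
        gcongr
      refine h1'.trans (le_of_eq ?_)
      rw [mul_pow, show ((4:ℝ)^j)^2 = 16^j by rw [← pow_mul, mul_comm, pow_mul]; norm_num,
        show ((1:ℝ)/16)^j = 1/16^j by rw [div_pow, one_pow]]
      rw [div_mul_div_comm, one_mul]
    calc (∑' j, |t (j + (N+1))|) ≤ ∑' j, (1/((n (N+1):ℝ))^2) * (1/16 : ℝ) ^ j :=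
        Summable.tsum_le_tsum hle hsubabs (Summable.mul_left _ (summable_geometric_of_lt_one (by norm_num) (by norm_num)))
      _ = (1/((n (N+1):ℝ))^2) * (1 - 1/16 : ℝ)⁻¹ := by
        rw [tsum_mul_left, tsum_geometric_of_lt_one (by norm_num) (by norm_num)]
      _ ≤ (16/15) / ((n (N+1):ℝ)) ^ 2 := by
        rw [show ((1:ℝ) - 1/16)⁻¹ = 16/15 by norm_num]
        exact le_of_eq (by ring)
  -- decomposition of the sum
  have hsplit2 : ∑' v, t v = t N + ∑' j, t (j + (N+1)) := by
    have hh1 := Summable.sum_add_tsum_nat_add (f := t) N htsum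
    have hzero : ∑ i ∈ Finset.range N, t i = 0 := by
      apply Finset.sum_eq_zero
      intro i hi
      have hiN : i + 1 ≤ N := Finset.mem_range.mp hi
      have hz : δ (i+1) = 0 := humin (i+1) (by omega) (by omega)
      simp only [htdef, hz]
      simp
    rw [← hh1, hzero, zero_add]
    have hh2 : ∑' (i:ℕ), t (i + N) = t (0 + N) + ∑' (i:ℕ), t ((i+1) + N) :=
      Summable.tsum_eq_zero_add ((summable_nat_add_iff N).mpr htsum)
    rw [hh2, Nat.zero_add]
    congr 1
    exact tsum_congr fun j => by rw [show j + 1 + N = j + (N+1) by omega]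
  have hTle : |∑' j, t (j + (N+1))| ≤ ∑' j, |t (j + (N+1))| := by
    simpa [Real.norm_eq_abs] using
      norm_tsum_le_tsum_norm (f := fun j => t (j + (N+1))) (by simpa [Real.norm_eq_abs] using hsubabs)
  have hdN := hdenpos N
  have htN : |t N| = |((δ (N+1):ℤ):ℝ)| / ((n N : ℝ) ^ 2 * (n (N + 1) : ℝ)) := by
    simp only [htdef]
    rw [abs_div, abs_of_pos hdN]
  have hcore : |((δ (N+1):ℤ):ℝ)| / ((n N : ℝ) ^ 2 * (n (N + 1) : ℝ)) - 16/15/((n (N+1):ℝ))^2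
      ≤ |d i₁ - d i₂| := by
    rw [hdiff, hsplit2]
    have habs2 : |t N| ≤ |t N + ∑' j, t (j + (N+1))| + |∑' j, t (j + (N+1))| := by
      calc |t N| = |(t N + ∑' j, t (j + (N+1))) + (-(∑' j, t (j + (N+1))))| := by
            congr 1; ring
        _ ≤ |t N + ∑' j, t (j + (N+1))| + |(-(∑' j, t (j + (N+1))))| := abs_add_le _ _
        _ = |t N + ∑' j, t (j + (N+1))| + |∑' j, t (j + (N+1))| := by rw [abs_neg]
    have h3 := hTle.trans htail
    rw [← htN]
    linarith
  -- rewrite the goal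
  have habsKr : |(i₁:ℝ) - (i₂:ℝ)| = (K:ℝ) := by
    rw [hKdef, hkdef, Int.cast_abs]
    push_cast
    ring_nf
  rw [ge_iff_le, habsKr]
  set M := max ((n 1 : ℕ):ℝ) ((K:ℤ):ℝ) with hMdef
  have hM2 : (2:ℝ) ≤ M := le_trans (by exact_mod_cast h1) (le_max_left _ _)
  have hMK : ((K:ℤ):ℝ) ≤ M := le_max_right _ _
  have hMn1 : ((n 1 : ℕ):ℝ) ≤ M := le_max_left _ _
  have hMpos : (0:ℝ) < M := by linarith
  have hEpos : (0:ℝ) < M ^ (3*m+1) := pow_pos hMpos _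
  have hE7 : M ^ 7 ≤ M ^ (3*m+1) := pow_le_pow_right₀ (by linarith) (by omega)
  refine le_trans ?_ hcore
  clear hcore htN hdN hTle hsplit2 htail hsubabs hgrow4 htabs hdiff htsum hteq
  clear htdef t hbound hsum hd habsKr hu1 hN hex hne hdenpos h2pow hgrow2
  -- basic real facts
  have hApos : (0:ℝ) < (n N:ℝ) := nposR _
  have hBpos : (0:ℝ) < (n (N+1):ℝ) := nposR _
  have hA1 : (1:ℝ) ≤ (n N:ℝ) := by exact_mod_cast npos N
  have hB2 : (2:ℝ) ≤ (n (N+1):ℝ) := by exact_mod_cast hn2 (N+1) (by omega)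
  have hA3B : ((n N:ℝ))^3 ≤ (n (N+1):ℝ) := by exact_mod_cast hlow N
  have h2A2B : 2*((n N:ℝ))^2 ≤ (n (N+1):ℝ) := by
    rcases Nat.eq_zero_or_pos N with hN0 | hN1
    · have hAone : (n N:ℝ) = 1 := by rw [hN0, h0]; norm_num
      rw [hAone]; linarith [hB2]
    · have hA2 : (2:ℝ) ≤ (n N:ℝ) := by exact_mod_cast hn2 N hN1
      nlinarith
  have hAK : (n N:ℝ) ≤ (K:ℝ) := by exact_mod_cast hANK
  have hKr1 : (1:ℝ) ≤ (K:ℝ) := by exact_mod_cast hK1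
  have hD1 : (1:ℝ) ≤ |((δ (N+1):ℤ):ℝ)| := by
    rw [← Int.cast_abs]
    exact_mod_cast Int.one_le_abs hδu
  have h25 : (32:ℝ) ≤ M^5 := by
    have := pow_le_pow_left₀ (by norm_num : (0:ℝ) ≤ 2) hM2 5
    norm_num at this; linarith
  have a32 : 32*M^2 ≤ M^7 := by nlinarith [h25, sq_nonneg M]
  rcases le_or_gt ((n (N+1):ℤ)) K with hBK | hKB
  · -- case A : n (N+1) ≤ K
    refine shape1 _ _ _ _ hBpos hEpos hD1 h2A2B hApos ?_
    have hBKr : (n (N+1):ℝ) ≤ (K:ℝ) := by exact_mod_cast hBK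
    have a1 : ((n N:ℝ))^2 ≤ (n (N+1):ℝ) := by linarith [sq_nonneg ((n N:ℝ)), h2A2B]
    have a2 : ((n N:ℝ))^2*(n (N+1):ℝ) ≤ ((n (N+1):ℝ))^2 := by nlinarith [hBpos]
    have a3 : ((n (N+1):ℝ))^2 ≤ M^2 := by nlinarith [hBpos.le, hBKr.trans (hMK.trans le_rfl)]
    linarith [hE7, sq_nonneg M]
  · -- case B : K < n (N+1)
    obtain ⟨q, hq⟩ := hδdvd (N+1)
    have habsu := hδabs (N+1)
    have hKk : |k| = K := hKdef.symm
    have habs_dk : |δ (N+1) - k| < 2*(n (N+1):ℤ) := by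
      have h8 : |δ (N+1) - k| ≤ |δ (N+1)| + |k| := abs_sub _ _
      linarith [habsu, hKB, hKk.ge, hKk.le]
    have hq2 : |q| < 2 := by
      have h9 : |(n (N+1):ℤ) * q| = (n (N+1):ℤ) * |q| := by
        rw [abs_mul, abs_of_pos (nposZ _)]
      rw [hq, h9] at habs_dk
      nlinarith [nposZ (N+1), abs_nonneg q]
    have hql := (abs_lt.mp hq2).1
    have hqr := (abs_lt.mp hq2).2
    interval_cases q
    · -- q = -1
      have h7 : |δ (N+1) - k| = (n (N+1):ℤ) := by
        rw [hq]; simp [abs_of_pos (nposZ (N+1))]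
      have hge : (n (N+1):ℤ) - K ≤ |δ (N+1)| := by
        have h8 : |δ (N+1) - k| ≤ |δ (N+1)| + |k| := abs_sub _ _
        linarith [hKk.le]
      have hDge : (n (N+1):ℝ) - (K:ℝ) ≤ |((δ (N+1):ℤ):ℝ)| := by
        rw [← Int.cast_abs]
        exact_mod_cast hge
      rcases le_or_gt ((n (N+1):ℝ)) (2*(K:ℝ)) with hB2K | hB2K
      · refine shape1 _ _ _ _ hBpos hEpos hD1 h2A2B hApos ?_
        have e1 : ((n N:ℝ))^2 ≤ ((K:ℝ))^2 := by nlinarith [hApos.le, hAK]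
        have e2 : ((n N:ℝ))^2*(n (N+1):ℝ) ≤ 2*((K:ℝ))^3 := by
          nlinarith [e1, hBpos.le, hB2K, sq_nonneg ((K:ℝ))]
        have e3 : ((K:ℝ))^3 ≤ M^3 := pow_le_pow_left₀ (by linarith) hMK 3
        have h24 : (16:ℝ) ≤ M^4 := by
          have := pow_le_pow_left₀ (by norm_num : (0:ℝ) ≤ 2) hM2 4
          norm_num at this; linarith
        have a16 : 16*M^3 ≤ M^7 := by nlinarith [h24, pow_nonneg hMpos.le 3]
        linarith [hE7, pow_nonneg hMpos.le 3]
      · refine shape3 _ _ _ _ hA1 hBpos hEpos ?_ h2A2B ?_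
        · linarith
        · have e1 : ((n N:ℝ))^2 ≤ M^2 := by nlinarith [hApos.le, hAK.trans hMK]
          linarith [hE7, sq_nonneg M]
    · -- q = 0
      have hδk : δ (N+1) = k := by
        have h10 := hq
        simp at h10
        omega
      have hDK : |((δ (N+1):ℤ):ℝ)| = (K:ℝ) := by
        rw [hδk, ← Int.cast_abs, hKdef]
      rcases Nat.eq_zero_or_pos N with hN0 | hN1
      · refine shape1 _ _ _ _ hBpos hEpos hD1 h2A2B hApos ?_
        have hAone : (n N:ℝ) = 1 := by rw [hN0, h0]; norm_num
        have hBM : (n (N+1):ℝ) ≤ M := by rw [hN0]; simpa using hMn1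
        have h26 : (64:ℝ) ≤ M^6 := by
          have := pow_le_pow_left₀ (by norm_num : (0:ℝ) ≤ 2) hM2 6
          norm_num at this; linarith
        have a64 : 64*M ≤ M^7 := by nlinarith [hMpos.le, h26]
        rw [hAone]
        nlinarith [hE7, hMpos.le, hBM, a64]
      · have hA2 : (2:ℝ) ≤ (n N:ℝ) := by exact_mod_cast hn2 N hN1
        refine shape2 _ _ _ _ hA2 hBpos hEpos ?_ hA3B ?_
        · rw [hDK]; exact hAK
        · have hupN := hup N hN1
          have c1 : (n (N+1):ℝ) ≤ ((n N:ℝ))^(3*m) := by exact_mod_cast hupN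
          have hAM : (n N:ℝ) ≤ M := le_trans hAK hMK
          have c2 : ((n N:ℝ))^(3*m) ≤ M^(3*m) := pow_le_pow_left₀ (by linarith) hAM _
          calc (n N:ℝ) * (n (N+1):ℝ) ≤ M * M^(3*m) :=
                mul_le_mul hAM (c1.trans c2) hBpos.le hMpos.le
            _ = M^(3*m+1) := by rw [pow_succ]; ring
    · -- q = 1
      have h7 : |δ (N+1) - k| = (n (N+1):ℤ) := by
        rw [hq]; simp [abs_of_pos (nposZ (N+1))]
      have hge : (n (N+1):ℤ) - K ≤ |δ (N+1)| := by
        have h8 : |δ (N+1) - k| ≤ |δ (N+1)| + |k| := abs_sub _ _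
        linarith [hKk.le]
      have hDge : (n (N+1):ℝ) - (K:ℝ) ≤ |((δ (N+1):ℤ):ℝ)| := by
        rw [← Int.cast_abs]
        exact_mod_cast hge
      rcases le_or_gt ((n (N+1):ℝ)) (2*(K:ℝ)) with hB2K | hB2K
      · refine shape1 _ _ _ _ hBpos hEpos hD1 h2A2B hApos ?_
        have e1 : ((n N:ℝ))^2 ≤ ((K:ℝ))^2 := by nlinarith [hApos.le, hAK]
        have e2 : ((n N:ℝ))^2*(n (N+1):ℝ) ≤ 2*((K:ℝ))^3 := by
          nlinarith [e1, hBpos.le, hB2K, sq_nonneg ((K:ℝ))]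
        have e3 : ((K:ℝ))^3 ≤ M^3 := pow_le_pow_left₀ (by linarith) hMK 3
        have h24 : (16:ℝ) ≤ M^4 := by
          have := pow_le_pow_left₀ (by norm_num : (0:ℝ) ≤ 2) hM2 4
          norm_num at this; linarith
        have a16 : 16*M^3 ≤ M^7 := by nlinarith [h24, pow_nonneg hMpos.le 3]
        linarith [hE7, pow_nonneg hMpos.le 3]
      · refine shape3 _ _ _ _ hA1 hBpos hEpos ?_ h2A2B ?_
        · linarith
        · have e1 : ((n N:ℝ))^2 ≤ M^2 := by nlinarith [hApos.le, hAK.trans hMK]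
          linarith [hE7, sq_nonneg M]
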